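/- Let G be a nontrivial finite 2-group with faithful irreducible complex characters χ and ψ, and let λ and μ be the unique linear characters of Z(G) such that the restriction of χ (respectively ψ) to Z(G) equals χ(1)·λ (respectively ψ(1)·μ). Then the linear character λμ of Z(G) is not faithful. -/

import Mathlib

open scoped ComplexOrder

/-- `χ` is the character of some finite-dimensional complex representation of `G`. -/
def IsChar (G : Type) [Group G] (χ : G → ℂ) : Prop :=
  ∃ V : FDRep ℂ G, V.character = χ

/-- `χ` is an irreducible complex character of `G`, i.e. the character of some
simple finite-dimensional complex representation of `G`. -/
def IsIrrChar (G : Type) [Group G] (χ : G → ℂ) : Prop :=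
  ∃ V : FDRep ℂ G, CategoryTheory.Simple V ∧ V.character = χ

/-- The standard inner product of complex class functions on a finite group. -/
noncomputable def charInner (G : Type) [Group G] [Fintype G] (f h : G → ℂ) : ℂ :=
  (Fintype.card G : ℂ)⁻¹ * ∑ g : G, f g * starRingEnd ℂ (h g)

/-- `η(χ,ψ)`: the number of distinct irreducible characters occurring as
constituents of the product character `χψ`. -/
noncomputable def eta (G : Type) [Group G] [Fintype G] (χ ψ : G → ℂ) : ℕ :=
  {θ : G → ℂ | IsIrrChar G θ ∧ 0 < charInner G (fun g => χ g * ψ g) θ}.ncard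

/-- A character is faithful if its kernel `{g | χ g = χ 1}` is trivial. -/
def IsFaithfulChar (G : Type) [Group G] (χ : G → ℂ) : Prop :=
  ∀ g : G, χ g = χ 1 → g = 1

/-- The center `Z(χ) = {g | |χ(g)| = χ(1)}` of a character. -/
def charCenter (G : Type) [Group G] (χ : G → ℂ) : Set G :=
  {g | (‖χ g‖ : ℂ) = χ 1}

/-- For a nontrivial finite 2-group with faithful irreducible χ, ψ, the product λμ
of the central characters of χ and ψ is not faithful. -/
theorem stmt10 (G : Type) [Group G] [Fintype G] [Nontrivial G]
    (hG : IsPGroup 2 G) (χ ψ : G → ℂ)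
    (hχ : IsIrrChar G χ) (hψ : IsIrrChar G ψ)
    (hfχ : IsFaithfulChar G χ) (hfψ : IsFaithfulChar G ψ)
    (lam mu : ↥(Subgroup.center G) →* ℂ)
    (hlam : ∀ z : ↥(Subgroup.center G), χ ↑z = χ 1 * lam z)
    (hmu : ∀ z : ↥(Subgroup.center G), ψ ↑z = ψ 1 * mu z) :
    ¬ (∀ z : ↥(Subgroup.center G), lam z * mu z = 1 → z = 1) := by
  intro h
  haveI : Fact (Nat.Prime 2) := ⟨Nat.prime_two⟩
  have hZ : IsPGroup 2 ↥(Subgroup.center G) := hG.to_subgroup _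
  haveI := hG.center_nontrivial
  obtain ⟨n, hn0, hn⟩ := hZ.nontrivial_iff_card.mp inferInstance
  have hdvd : 2 ∣ Nat.card ↥(Subgroup.center G) := by
    rw [hn]; exact dvd_pow_self 2 hn0.ne'
  obtain ⟨z, hz⟩ := exists_prime_orderOf_dvd_card' 2 hdvd
  have hz1 : z ≠ 1 := by
    intro hzz; rw [hzz, orderOf_one] at hz; norm_num at hz
  have hzsq : z * z = 1 := by
    have := pow_orderOf_eq_one z
    rwa [hz, pow_two] at this
  have key : ∀ (θ : G → ℂ) (ν : ↥(Subgroup.center G) →* ℂ),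
      IsFaithfulChar G θ → (∀ w : ↥(Subgroup.center G), θ ↑w = θ 1 * ν w) → ν z = -1 := by
    intro θ ν hf hr
    have hsq : ν z * ν z = 1 := by rw [← map_mul, hzsq, map_one]
    have hne : ν z ≠ 1 := by
      intro h1
      apply hz1
      have h2 : θ ↑z = θ 1 := by rw [hr z, h1, mul_one]
      exact Subtype.ext (by simpa using hf _ h2)
    have h3 : (ν z - 1) * (ν z + 1) = 0 := by linear_combination hsq
    rcases mul_eq_zero.mp h3 with h' | h'
    · exact absurd (by linear_combination h') hne
    · linear_combination h'
  have hl := key χ lam hfχ hlam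
  have hm := key ψ mu hfψ hmu
  exact hz1 (h z (by rw [hl, hm]; ring))
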